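/- Let ψ, ν ∈ Ψ and define, for u ≥ e², N_ψ(u) = exp(sup_{p ≥ 2} p·(log u − log ψ(p))) and N_ν(u) = exp(sup_{p ≥ 2} p·(log u − log ν(p))). Then lim_{p → ∞} ψ(p)/ν(p) = 0 if and only if N_ψ is essentially greater than N_ν, i.e. for every λ > 0 one has lim_{u → ∞} N_ν(λu)/N_ψ(u) = 0. -/

import Mathlib

open MeasureTheory Filter Set
open scoped ENNReal Topology

/-- `ψ` belongs to the class `Ψ`: `p ↦ p·log ψ(p)` is continuous, convex, increasing,
tends to `+∞`, and `ψ(p) → ∞` as `p → ∞`; `ψ` is positive on `[2,∞)`. -/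
structure PsiClass (ψ : ℝ → ℝ) : Prop where
  pos : ∀ p : ℝ, 2 ≤ p → 0 < ψ p
  cont : ContinuousOn (fun p => p * Real.log (ψ p)) (Set.Ici 2)
  convex : ConvexOn ℝ (Set.Ici 2) (fun p => p * Real.log (ψ p))
  mono : MonotoneOn (fun p => p * Real.log (ψ p)) (Set.Ici 2)
  tendsto_top : Filter.Tendsto (fun p => p * Real.log (ψ p)) Filter.atTop Filter.atTop
  psi_tendsto_top : Filter.Tendsto ψ Filter.atTop Filter.atTop

/-- `N_ψ(u) = exp( sup_{p ≥ 2} p·(log u − log ψ(p)) )`. -/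
noncomputable def Nfun (ψ : ℝ → ℝ) (u : ℝ) : ℝ :=
  Real.exp (sSup {v | ∃ p : ℝ, 2 ≤ p ∧ v = p * (Real.log u - Real.log (ψ p))})

/-- The set whose supremum defines `log N_ψ(exp t)`. -/
def Aset (ψ : ℝ → ℝ) (t : ℝ) : Set ℝ :=
  {v | ∃ p : ℝ, 2 ≤ p ∧ v = p * (t - Real.log (ψ p))}

lemma Nfun_eq (ψ : ℝ → ℝ) (u : ℝ) : Nfun ψ u = Real.exp (sSup (Aset ψ (Real.log u))) := rfl

lemma Aset_nonempty (ψ : ℝ → ℝ) (t : ℝ) : (Aset ψ t).Nonempty :=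
  ⟨2 * (t - Real.log (ψ 2)), 2, le_refl 2, rfl⟩

lemma Aset_bddAbove {ψ : ℝ → ℝ} (hψ : PsiClass ψ) (t : ℝ) : BddAbove (Aset ψ t) := by
  obtain ⟨p₁, hp₁⟩ := eventually_atTop.mp (hψ.psi_tendsto_top.eventually_ge_atTop (Real.exp t))
  set p₂ : ℝ := max p₁ 2 with hp₂def
  refine ⟨max 0 (p₂ * |t| - 2 * Real.log (ψ 2)), ?_⟩
  rintro v ⟨p, hp2, rfl⟩
  rcases le_or_gt p₂ p with h | h
  · have hψp : Real.exp t ≤ ψ p := hp₁ p (le_trans (le_max_left _ _) h)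
    have hlog : t ≤ Real.log (ψ p) := by
      rw [Real.le_log_iff_exp_le (hψ.pos p hp2)]; exact hψp
    have : p * (t - Real.log (ψ p)) ≤ 0 :=
      mul_nonpos_of_nonneg_of_nonpos (by linarith) (by linarith)
    exact le_trans this (le_max_left _ _)
  · have hmono : 2 * Real.log (ψ 2) ≤ p * Real.log (ψ p) := by
      have := hψ.mono (Set.self_mem_Ici) (Set.mem_Ici.mpr hp2) hp2
      simpa using this
    have h1 : p * t ≤ p₂ * |t| := by
      calc p * t ≤ p * |t| := mul_le_mul_of_nonneg_left (le_abs_self t) (by linarith)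
        _ ≤ p₂ * |t| := mul_le_mul_of_nonneg_right h.le (abs_nonneg t)
    have : p * (t - Real.log (ψ p)) ≤ p₂ * |t| - 2 * Real.log (ψ 2) := by
      rw [mul_sub]; linarith
    exact le_trans this (le_max_right _ _)

lemma le_sSup_Aset {ψ : ℝ → ℝ} (hψ : PsiClass ψ) (t p : ℝ) (hp : 2 ≤ p) :
    p * (t - Real.log (ψ p)) ≤ sSup (Aset ψ t) :=
  le_csSup (Aset_bddAbove hψ t) ⟨p, hp, rfl⟩

lemma sSup_Aset_le {ψ : ℝ → ℝ} (t b : ℝ)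
    (h : ∀ p, 2 ≤ p → p * (t - Real.log (ψ p)) ≤ b) : sSup (Aset ψ t) ≤ b := by
  refine csSup_le (Aset_nonempty ψ t) ?_
  rintro v ⟨p, hp, rfl⟩
  exact h p hp

/-- Forward direction, key estimate on the level of logarithms. -/
lemma key_forward {ψ ν : ℝ → ℝ} (hψ : PsiClass ψ) (hν : PsiClass ν)
    (hlim : Filter.Tendsto (fun p => ψ p / ν p) Filter.atTop (𝓝 0)) (c : ℝ) :
    Filter.Tendsto (fun t => sSup (Aset ν (t + c)) - sSup (Aset ψ t)) Filter.atTop Filter.atBot := by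
  -- log ψ p - log ν p → -∞
  have hpos : ∀ᶠ p in atTop, ψ p / ν p ∈ Set.Ioi (0:ℝ) := by
    filter_upwards [eventually_ge_atTop (2:ℝ)] with p hp
    exact div_pos (hψ.pos p hp) (hν.pos p hp)
  have h1 : Tendsto (fun p => ψ p / ν p) atTop (𝓝[>] 0) :=
    tendsto_nhdsWithin_iff.mpr ⟨hlim, hpos⟩
  have h2 : Tendsto (fun p => Real.log (ψ p / ν p)) atTop atBot :=
    Real.tendsto_log_nhdsGT_zero.comp h1
  have hlog : Tendsto (fun p => Real.log (ψ p) - Real.log (ν p)) atTop atBot := by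
    refine h2.congr' ?_
    filter_upwards [eventually_ge_atTop (2:ℝ)] with p hp
    exact Real.log_div (ne_of_gt (hψ.pos p hp)) (ne_of_gt (hν.pos p hp))
  rw [tendsto_atBot]
  intro b
  set C : ℝ := c + max 1 (-b / 2) with hCdef
  have hcC : c - C ≤ -1 := by
    have := le_max_left (1:ℝ) (-b/2); rw [hCdef]; linarith
  have h2cC : 2 * (c - C) ≤ b := by
    have := le_max_right (1:ℝ) (-b/2); rw [hCdef]; linarith
  obtain ⟨p₀, hp₀⟩ := eventually_atTop.mp (hlog.eventually (eventually_le_atBot (-C)))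
  set p₁ : ℝ := max p₀ 2 with hp₁def
  set P : ℝ := p₁ + 1 with hPdef
  have hp₁2 : (2:ℝ) ≤ p₁ := le_max_right _ _
  have hP2 : (2:ℝ) ≤ P := by simp [hPdef]; linarith
  set T₀ : ℝ := p₁ * c - 2 * Real.log (ν 2) + P * Real.log (ψ P) - b with hT₀def
  filter_upwards [eventually_ge_atTop (max T₀ (-c))] with t ht
  have htT₀ : T₀ ≤ t := le_trans (le_max_left _ _) ht
  have htc : 0 ≤ t + c := by
    have := le_trans (le_max_right _ _) ht; linarith
  have hFlb : P * (t - Real.log (ψ P)) ≤ sSup (Aset ψ t) := le_sSup_Aset hψ t P hP2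
  have hmain : sSup (Aset ν (t + c)) ≤ sSup (Aset ψ t) + b := by
    refine sSup_Aset_le _ _ (fun q hq => ?_)
    rcases le_or_gt p₁ q with hcase | hcase
    · -- large q : use log ν q ≥ log ψ q + C
      have hq0 : Real.log (ψ q) - Real.log (ν q) ≤ -C := hp₀ q (le_trans (le_max_left _ _) hcase)
      have hsup : q * (t - Real.log (ψ q)) ≤ sSup (Aset ψ t) := le_sSup_Aset hψ t q hq
      have hqcC : q * (c - C) ≤ 2 * (c - C) := by nlinarith
      have hqlog : q * (Real.log (ψ q) + C) ≤ q * Real.log (ν q) :=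
        mul_le_mul_of_nonneg_left (by linarith) (by linarith)
      have : q * (t + c - Real.log (ν q)) ≤ q * (t - Real.log (ψ q)) + q * (c - C) := by
        have expand : q * (t + c - Real.log (ν q)) =
            q * (t - Real.log (ψ q)) + q * (c - C) + (q * (Real.log (ψ q) + C) - q * Real.log (ν q)) := by
          ring
        rw [expand]; linarith
      linarith
    · -- small q
      have hgq : 2 * Real.log (ν 2) ≤ q * Real.log (ν q) := by
        have := hν.mono (Set.self_mem_Ici) (Set.mem_Ici.mpr hq) hq
        simpa using this
      have hqt : q * (t + c) ≤ p₁ * (t + c) := mul_le_mul_of_nonneg_right hcase.le htc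
      have : q * (t + c - Real.log (ν q)) ≤ p₁ * (t + c) - 2 * Real.log (ν 2) := by
        rw [mul_sub]; linarith
      have hP : P * (t - Real.log (ψ P)) = P * t - P * Real.log (ψ P) := by ring
      rw [hP] at hFlb
      have hPt : P * t = p₁ * t + t := by rw [hPdef]; ring
      rw [hPt] at hFlb
      -- p₁(t+c) - 2 log ν 2 ≤ p₁ t + t - P log ψ P + b  ⟸  t ≥ T₀
      have : p₁ * (t + c) - 2 * Real.log (ν 2) ≤ sSup (Aset ψ t) + b := by
        have hexp : p₁ * (t + c) = p₁ * t + p₁ * c := by ring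
        rw [hexp]
        have : p₁ * c - 2 * Real.log (ν 2) + P * Real.log (ψ P) - b ≤ t := htT₀
        linarith
      linarith
  linarith

theorem stmt5 (ψ ν : ℝ → ℝ) (hψ : PsiClass ψ) (hν : PsiClass ν) :
    Filter.Tendsto (fun p => ψ p / ν p) Filter.atTop (𝓝 0) ↔
      ∀ lam : ℝ, 0 < lam →
        Filter.Tendsto (fun u => Nfun ν (lam * u) / Nfun ψ u) Filter.atTop (𝓝 0) := by
  constructor
  · -- forward
    intro hlim lam hlam
    have key := key_forward hψ hν hlim (Real.log lam)
    have comp : Tendsto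
        (fun u => Real.exp (sSup (Aset ν (Real.log u + Real.log lam)) - sSup (Aset ψ (Real.log u))))
        atTop (𝓝 0) :=
      Real.tendsto_exp_atBot.comp (key.comp Real.tendsto_log_atTop)
    refine comp.congr' ?_
    filter_upwards [eventually_gt_atTop (0:ℝ)] with u hu
    rw [Nfun_eq, Nfun_eq, ← Real.exp_sub]
    congr 2
    rw [Real.log_mul (ne_of_gt hlam) (ne_of_gt hu), add_comm]
  · -- backward
    intro hN
    by_contra hcon
    obtain ⟨ε, hε, hfreq⟩ : ∃ ε > (0:ℝ), ∃ᶠ p in atTop, ε ≤ |ψ p / ν p| := by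
      by_contra h
      push_neg at h
      apply hcon
      rw [Metric.tendsto_nhds]
      intro ε hε
      have h2 := h ε hε
      filter_upwards [h2] with p hp
      rw [Real.dist_eq, sub_zero]
      exact hp
    set lam : ℝ := ε⁻¹ with hlamdef
    have hlam : 0 < lam := inv_pos.mpr hε
    have hten := hN lam hlam
    obtain ⟨U, hU⟩ := eventually_atTop.mp (hten.eventually_lt_const (by norm_num : (0:ℝ) < 1))
    set T : ℝ := max (Real.log (max U 1)) 0 with hTdef
    have hT0 : 0 ≤ T := le_max_right _ _
    have hlogψ : Tendsto (fun p => Real.log (ψ p)) atTop atTop :=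
      Real.tendsto_log_atTop.comp hψ.psi_tendsto_top
    have hev : ∀ᶠ p in atTop, 3 ≤ p ∧ |2 * Real.log (ψ 2)| + T ≤ Real.log (ψ p) :=
      (eventually_ge_atTop 3).and (hlogψ.eventually_ge_atTop _)
    obtain ⟨p, hfp, h3p, hlp⟩ := (hfreq.and_eventually hev).exists
    have hp2 : (2:ℝ) ≤ p := by linarith
    have hp2' : (2:ℝ) < p := by linarith
    -- subgradient t of f(q) = q log ψ q at p
    set Sl : Set ℝ :=
      {s | ∃ q : ℝ, 2 ≤ q ∧ q < p ∧ s = (p * Real.log (ψ p) - q * Real.log (ψ q)) / (p - q)}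
      with hSldef
    have hSlne : Sl.Nonempty :=
      ⟨(p * Real.log (ψ p) - 2 * Real.log (ψ 2)) / (p - 2), 2, le_refl 2, hp2', rfl⟩
    have hSlbdd : BddAbove Sl := by
      refine ⟨((p+1) * Real.log (ψ (p+1)) - p * Real.log (ψ p)) / (p + 1 - p), ?_⟩
      rintro s ⟨q, hq2, hqp, rfl⟩
      exact hψ.convex.slope_mono_adjacent (Set.mem_Ici.mpr hq2)
        (Set.mem_Ici.mpr (by linarith)) hqp (lt_add_one p)
    set t : ℝ := sSup Sl with htdef
    have htlb : (p * Real.log (ψ p) - 2 * Real.log (ψ 2)) / (p - 2) ≤ t :=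
      le_csSup hSlbdd ⟨2, le_refl 2, hp2', rfl⟩
    have htT : T ≤ t := by
      refine le_trans ?_ htlb
      rw [le_div_iff₀ (by linarith : (0:ℝ) < p - 2)]
      have habs : 2 * Real.log (ψ 2) ≤ |2 * Real.log (ψ 2)| := le_abs_self _
      have hpmul : p * (|2 * Real.log (ψ 2)| + T) ≤ p * Real.log (ψ p) :=
        mul_le_mul_of_nonneg_left hlp (by linarith)
      nlinarith [abs_nonneg (2 * Real.log (ψ 2))]
    have subgrad : ∀ q : ℝ, 2 ≤ q →
        q * t - q * Real.log (ψ q) ≤ p * t - p * Real.log (ψ p) := by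
      intro q hq
      rcases lt_trichotomy q p with h | h | h
      · have hs : (p * Real.log (ψ p) - q * Real.log (ψ q)) / (p - q) ≤ t :=
          le_csSup hSlbdd ⟨q, hq, h, rfl⟩
        rw [div_le_iff₀ (by linarith : (0:ℝ) < p - q)] at hs
        nlinarith
      · subst h; exact le_refl _
      · have hs : t ≤ (q * Real.log (ψ q) - p * Real.log (ψ p)) / (q - p) := by
          refine csSup_le hSlne ?_
          rintro s ⟨q', hq', hq'p, rfl⟩
          exact hψ.convex.slope_mono_adjacent (Set.mem_Ici.mpr hq')
            (Set.mem_Ici.mpr hq) hq'p h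
        rw [le_div_iff₀ (by linarith : (0:ℝ) < q - p)] at hs
        nlinarith
    have hF_le : sSup (Aset ψ t) ≤ p * t - p * Real.log (ψ p) := by
      refine sSup_Aset_le _ _ (fun q hq => ?_)
      rw [mul_sub]
      exact subgrad q hq
    -- ν p ≤ lam * ψ p
    have hψp := hψ.pos p hp2
    have hνp := hν.pos p hp2
    have hratio : ε ≤ ψ p / ν p := by
      rwa [abs_of_pos (div_pos hψp hνp)] at hfp
    have hνle : ν p ≤ lam * ψ p := by
      rw [hlamdef]
      rw [le_div_iff₀ hνp] at hratio
      rw [inv_mul_eq_div, le_div_iff₀ hε]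
      linarith
    have hlogν : Real.log (ν p) ≤ Real.log lam + Real.log (ψ p) := by
      have := Real.log_le_log (hνp) hνle
      rwa [Real.log_mul (ne_of_gt hlam) (ne_of_gt hψp)] at this
    have hG_ge : p * t - p * Real.log (ψ p) ≤ sSup (Aset ν (t + Real.log lam)) := by
      have hmem : p * (t + Real.log lam - Real.log (ν p)) ≤ sSup (Aset ν (t + Real.log lam)) :=
        le_sSup_Aset hν _ p hp2
      have : p * t - p * Real.log (ψ p) ≤ p * (t + Real.log lam - Real.log (ν p)) := by
        have h' : t - Real.log (ψ p) ≤ t + Real.log lam - Real.log (ν p) := by linarith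
        have := mul_le_mul_of_nonneg_left h' (by linarith : (0:ℝ) ≤ p)
        rw [mul_sub] at this ⊢
        linarith [this]
      linarith
    -- the contradiction at u = exp t
    set u : ℝ := Real.exp t with hudef
    have hu0 : 0 < u := Real.exp_pos t
    have huU : U ≤ u := by
      have h1 : Real.log (max U 1) ≤ t := le_trans (le_max_left _ _) htT
      have h2 : max U 1 ≤ u := by
        rw [hudef, ← Real.exp_log (lt_of_lt_of_le one_pos (le_max_right U 1))]
        exact Real.exp_le_exp.mpr h1
      exact le_trans (le_max_left _ _) h2
    have hlt := hU u huU
    have hNψ : Nfun ψ u = Real.exp (sSup (Aset ψ t)) := by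
      rw [Nfun_eq, hudef, Real.log_exp]
    have hNν : Nfun ν (lam * u) = Real.exp (sSup (Aset ν (t + Real.log lam))) := by
      rw [Nfun_eq, hudef, Real.log_mul (ne_of_gt hlam) (ne_of_gt (Real.exp_pos t)),
        Real.log_exp, add_comm]
    have hge : (1:ℝ) ≤ Nfun ν (lam * u) / Nfun ψ u := by
      rw [hNψ, hNν, one_le_div (Real.exp_pos _)]
      exact Real.exp_le_exp.mpr (le_trans hF_le hG_ge)
    linarith
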